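/- For all positive integers r, m, s, the following identity holds in the field of rational functions ℚ(t): W(r,m,s)′/W(r,m,s) = −s/t + (m−r+s−1)/(t−1) − ((r+1)/(t(t−1)))·(r(m+s)·z − (r+m+1)·t·((t−1)z′ + rz))/((s−r−1)z′ + (r+m+1)(tz′ + rz)). -/

import Mathlib

open Polynomial Finset

/-- `W(r,m,s)(t) = Σ_{j=0}^m (−1)^j C(r+m+1−j, m−j) C(s+m, j) t^{m−j}` in `ℚ[t]`. -/
noncomputable def W (r m s : ℕ) : Polynomial ℚ :=
  ∑ j ∈ range (m + 1),
    C ((-1 : ℚ) ^ j * (Nat.choose (r + m + 1 - j) (m - j) : ℚ) * (Nat.choose (s + m) j : ℚ))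
      * X ^ (m - j)

/-- `z(t) = Σ_{j=0}^m (−1)^j (C(r+j−1,j)·C(m,j)/C(s+j−1,j)) t^j`, the terminating
hypergeometric polynomial `₂F₁(r, −m; s; t)`. -/
noncomputable def z (r m s : ℕ) : Polynomial ℚ :=
  ∑ j ∈ range (m + 1),
    C ((-1 : ℚ) ^ j * (Nat.choose (r + j - 1) j : ℚ) * (Nat.choose m j : ℚ)
        / (Nat.choose (s + j - 1) j : ℚ)) * X ^ j

noncomputable def a (r m s k : ℕ) : ℚ :=
  (-1 : ℚ) ^ k * (Nat.choose (r + k) k : ℚ) * (Nat.choose m k : ℚ)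
    / (Nat.choose (s + k) k : ℚ)

noncomputable def cc (r m s : ℕ) : ℚ :=
  (-1:ℚ)^m * (((r:ℚ)+1)*((r:ℚ)+2)*((s:ℚ)+m+1))
    / (((s:ℚ)+1) * (Nat.choose (s+m+1) m : ℚ))

section FactorialLemmas
open scoped Nat

lemma coeff_z (r m s n : ℕ) : (z (r+1) m (s+1)).coeff n = a r m s n := by
  unfold z a
  rw [finset_sum_coeff]
  simp only [coeff_C_mul, coeff_X_pow]
  rcases le_or_gt n m with h | h
  · rw [Finset.sum_eq_single n]
    · simp only [if_pos rfl, mul_one]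
      rw [show r+1+n-1 = r+n from by omega, show s+1+n-1 = s+n from by omega]; simp
    · intro j _ hj; simp [Ne.symm hj]
    · intro hn; exact absurd (mem_range.mpr (by omega)) hn
  · rw [Finset.sum_eq_zero, eq_comm]
    · simp [Nat.choose_eq_zero_of_lt h]
    · intro j hj; rw [mem_range] at hj
      rw [if_neg (by omega), mul_zero]
lemma fact_ne (n : ℕ) : ((n ! : ℚ)) ≠ 0 := by
  exact_mod_cast (Nat.factorial_pos n).ne'

lemma choose_ne (n k : ℕ) (h : k ≤ n) : ((n.choose k : ℚ)) ≠ 0 := by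
  exact_mod_cast (Nat.choose_pos h).ne'

lemma Rrec (r m s k : ℕ) :
    ((k:ℚ)+1) * ((k:ℚ)+s+1) * a r m s (k+1)
      = ((k:ℚ)+r+1) * ((k:ℚ)-m) * a r m s k := by
  rcases lt_or_ge k m with h | h
  · obtain ⟨q, rfl⟩ : ∃ q, m = k+1+q := ⟨m-(k+1), by omega⟩
    unfold a
    rw [Nat.cast_choose ℚ (show k+1 ≤ r+(k+1) by omega),
        Nat.cast_choose ℚ (show k ≤ r+k by omega),
        Nat.cast_choose ℚ (show k+1 ≤ k+1+q by omega),
        Nat.cast_choose ℚ (show k ≤ k+1+q by omega),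
        Nat.cast_choose ℚ (show k+1 ≤ s+(k+1) by omega),
        Nat.cast_choose ℚ (show k ≤ s+k by omega)]
    rw [show r+(k+1)-(k+1) = r from by omega, show r+k-k = r from by omega,
        show s+(k+1)-(k+1) = s from by omega, show s+k-k = s from by omega,
        show k+1+q-(k+1) = q from by omega, show k+1+q-k = q+1 from by omega]
    have h1 : ((r+(k+1))! : ℚ) = ((r:ℚ)+k+1) * (r+k)! := by
      rw [show r+(k+1) = (r+k)+1 from by omega, Nat.factorial_succ]; push_cast; ring
    have h2 : ((s+(k+1))! : ℚ) = ((s:ℚ)+k+1) * (s+k)! := by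
      rw [show s+(k+1) = (s+k)+1 from by omega, Nat.factorial_succ]; push_cast; ring
    have h3 : (((k+1))! : ℚ) = ((k:ℚ)+1) * k ! := by
      rw [Nat.factorial_succ]; push_cast; ring
    have h4 : (((q+1))! : ℚ) = ((q:ℚ)+1) * q ! := by
      rw [Nat.factorial_succ]; push_cast; ring
    rw [h1, h2, h3, h4]
    have e1 := fact_ne (r+k); have e2 := fact_ne (s+k); have e3 := fact_ne k
    have e4 := fact_ne q; have e5 := fact_ne r; have e6 := fact_ne s
    have e7 := fact_ne (k+1+q)
    have p1 : ((k:ℚ)+1) ≠ 0 := by positivity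
    push_cast
    field_simp
    ring
  · have e1 : a r m s (k+1) = 0 := by
      unfold a; rw [Nat.choose_eq_zero_of_lt (show m < k+1 by omega)]; simp
    rw [e1]
    rcases eq_or_lt_of_le h with h2 | h2
    · have : ((k:ℚ)) = m := by exact_mod_cast h2.symm
      rw [this]; ring
    · have e2 : a r m s k = 0 := by
        unfold a; rw [Nat.choose_eq_zero_of_lt h2]; simp
      rw [e2]; ring

end FactorialLemmas

lemma coeff_z1 (r m s n : ℕ) :
    (derivative (z (r+1) m (s+1))).coeff n = ((n:ℚ)+1) * a r m s (n+1) := by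
  rw [coeff_derivative, coeff_z]; push_cast; ring

lemma coeff_z2 (r m s n : ℕ) :
    (derivative (derivative (z (r+1) m (s+1)))).coeff n
      = ((n:ℚ)+1) * ((n:ℚ)+2) * a r m s (n+2) := by
  rw [coeff_derivative, coeff_z1]; push_cast; ring

lemma ode (r m s : ℕ) :
    derivative (derivative (z (r+1) m (s+1))) * X^1
      - derivative (derivative (z (r+1) m (s+1))) * X^2
      + C ((s:ℚ)+1) * derivative (z (r+1) m (s+1))
      - C ((r:ℚ)+2-m) * (derivative (z (r+1) m (s+1)) * X^1)
      + C (((r:ℚ)+1)*m) * z (r+1) m (s+1) = 0 := by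
  ext n
  simp only [coeff_add, coeff_sub, coeff_C_mul, coeff_zero, coeff_mul_X_pow']
  rcases n with _ | k
  · rw [if_neg (by omega : ¬ 1 ≤ 0), if_neg (by omega : ¬ 2 ≤ 0),
      coeff_z1, coeff_z]
    have := Rrec r m s 0
    push_cast at this ⊢
    linear_combination this
  · rcases k with _ | j
    · rw [if_pos (by omega : 1 ≤ 1), if_neg (by omega : ¬ 2 ≤ 1),
        show 1-1 = 0 from rfl, coeff_z2, coeff_z1, coeff_z1, coeff_z]
      have := Rrec r m s 1
      push_cast at this ⊢
      linear_combination this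
    · rw [if_pos (by omega : 1 ≤ j+2), if_pos (by omega : 2 ≤ j+2),
        show j+2-1 = j+1 from by omega, show j+2-2 = j from by omega,
        coeff_z2, coeff_z2, coeff_z1, coeff_z1, coeff_z]
      rw [show j+1+2 = j+2+1 from by omega]
      have := Rrec r m s (j+2)
      push_cast at this ⊢
      linear_combination this

section FactorialLemmas2
open scoped Nat

lemma coeff_W (r m s n : ℕ) : (W (r+1) m (s+1)).coeff n =
    if n ≤ m then
      (-1:ℚ)^(m-n) * (Nat.choose (r+n+2) n : ℚ) * (Nat.choose (s+m+1) (m-n) : ℚ)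
    else 0 := by
  unfold W
  rw [finset_sum_coeff]
  simp only [coeff_C_mul, coeff_X_pow]
  rcases le_or_gt n m with h | h
  · rw [if_pos h, Finset.sum_eq_single (m-n)]
    · rw [if_pos (by omega : n = m-(m-n)), mul_one,
        show r+1+m+1-(m-n) = r+n+2 from by omega, show m-(m-n) = n from by omega,
        show s+1+m = s+m+1 from by omega]
    · intro j hj hne; rw [mem_range] at hj
      rw [if_neg (by omega), mul_zero]
    · intro hn; exact absurd (mem_range.mpr (by omega)) hn
  · rw [if_neg (by omega), Finset.sum_eq_zero]
    intro j hj; rw [mem_range] at hj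
    rw [if_neg (by omega), mul_zero]

lemma core (r m s n : ℕ) (h : n ≤ m) :
    ((n:ℚ)+s+1) * cc r m s *
        ((-1:ℚ)^(m-n) * (Nat.choose (r+n+2) n : ℚ) * (Nat.choose (s+m+1) (m-n) : ℚ))
      = ((n:ℚ)+r+1) * ((n:ℚ)+r+2) * ((s:ℚ)+m+1) * a r m s n := by
  obtain ⟨q, rfl⟩ : ∃ q, m = n + q := ⟨m-n, by omega⟩
  unfold a cc
  rw [show n+q-n = q from by omega]
  rw [Nat.cast_choose ℚ (show n ≤ r+n by omega),
      Nat.cast_choose ℚ (show n ≤ n+q by omega),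
      Nat.cast_choose ℚ (show n ≤ s+n by omega),
      Nat.cast_choose ℚ (show n ≤ r+n+2 by omega),
      Nat.cast_choose ℚ (show n+q ≤ s+(n+q)+1 by omega),
      Nat.cast_choose ℚ (show q ≤ s+(n+q)+1 by omega)]
  rw [show r+n-n = r from by omega, show n+q-n = q from by omega,
      show s+n-n = s from by omega, show r+n+2-n = r+2 from by omega,
      show s+(n+q)+1-(n+q) = s+1 from by omega,
      show s+(n+q)+1-q = s+n+1 from by omega]
  have hsgn : (-1:ℚ)^(n+q) * (-1:ℚ)^q = (-1:ℚ)^n := by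
    rw [pow_add, mul_assoc, ← pow_add, ← two_mul, pow_mul]; norm_num
  have h1 : ((r+n+2)! : ℚ) = ((r:ℚ)+n+2) * ((r:ℚ)+n+1) * (r+n)! := by
    rw [show r+n+2 = ((r+n)+1)+1 from by omega, Nat.factorial_succ, Nat.factorial_succ]
    push_cast; ring
  have h2 : ((r+2)! : ℚ) = ((r:ℚ)+2) * ((r:ℚ)+1) * r ! := by
    rw [show r+2 = (r+1)+1 from by omega, Nat.factorial_succ, Nat.factorial_succ]
    push_cast; ring
  have h3 : ((s+1)! : ℚ) = ((s:ℚ)+1) * s ! := by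
    rw [Nat.factorial_succ]; push_cast; ring
  have h4 : ((s+n+1)! : ℚ) = ((s:ℚ)+n+1) * (s+n)! := by
    rw [Nat.factorial_succ]; push_cast; ring
  rw [h1, h2, h3, h4]
  have e1 := fact_ne (r+n); have e2 := fact_ne (s+n); have e3 := fact_ne n
  have e4 := fact_ne q; have e5 := fact_ne r; have e6 := fact_ne s
  have e7 := fact_ne (n+q); have e8 := fact_ne (s+(n+q)+1)
  have p1 : ((s:ℚ)+1) ≠ 0 := by positivity
  have p2 : ((s:ℚ)+n+1) ≠ 0 := by positivity
  have p3 : ((r:ℚ)+1) ≠ 0 := by positivity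
  have p4 : ((r:ℚ)+2) ≠ 0 := by positivity
  have p5 : ((r:ℚ)+n+1) ≠ 0 := by positivity
  have p6 : ((r:ℚ)+n+2) ≠ 0 := by positivity
  push_cast
  rw [← hsgn]
  field_simp
  ring

end FactorialLemmas2

lemma a_zero (r m s k : ℕ) (h : m < k) : a r m s k = 0 := by
  unfold a; rw [Nat.choose_eq_zero_of_lt h]; simp

lemma coeff_z1X (r m s n : ℕ) :
    (derivative (z (r+1) m (s+1)) * X^1).coeff n = (n:ℚ) * a r m s n := by
  rw [coeff_mul_X_pow']
  rcases n with _ | k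
  · simp
  · rw [if_pos (by omega : 1 ≤ k+1), show k+1-1 = k from by omega, coeff_z1]
    push_cast; ring

lemma DW (r m s : ℕ) :
    C ((s:ℚ)-r-1) * derivative (z (r+1) m (s+1))
      + C ((r:ℚ)+m+2) * (derivative (z (r+1) m (s+1)) * X^1
          + C ((r:ℚ)+1) * z (r+1) m (s+1))
      = C (cc r m s) * W (r+1) m (s+1) := by
  ext n
  simp only [coeff_add, coeff_C_mul, coeff_z1X, coeff_z1, coeff_z, coeff_W]
  rcases le_or_gt n m with h | h
  · rw [if_pos h]
    have key : ((n:ℚ)+s+1) * (((s:ℚ)-r-1) * (((n:ℚ)+1) * a r m s (n+1))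
        + ((r:ℚ)+m+2) * ((n:ℚ) * a r m s n + ((r:ℚ)+1) * a r m s n))
        = ((n:ℚ)+s+1) * (cc r m s *
            ((-1:ℚ)^(m-n) * (Nat.choose (r+n+2) n : ℚ) * (Nat.choose (s+m+1) (m-n) : ℚ))) := by
      linear_combination ((s:ℚ)-r-1) * Rrec r m s n - core r m s n h
    exact mul_left_cancel₀ (by positivity) key
  · rw [if_neg (by omega), a_zero r m s n h, a_zero r m s (n+1) (by omega)]
    ring
lemma keyL (r m s : ℕ) :
    X*(X-1)*derivative (C ((s:ℚ)-r-1) * derivative (z (r+1) m (s+1))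
        + C ((r:ℚ)+m+2) * (derivative (z (r+1) m (s+1)) * X^1
          + C ((r:ℚ)+1) * z (r+1) m (s+1)))
      + (C ((s:ℚ)+1)*(X-1) - C ((m:ℚ)-r+s-1)*X) *
          (C ((s:ℚ)-r-1) * derivative (z (r+1) m (s+1))
            + C ((r:ℚ)+m+2) * (derivative (z (r+1) m (s+1)) * X^1
              + C ((r:ℚ)+1) * z (r+1) m (s+1)))
      + C ((r:ℚ)+2) *
          (C (((r:ℚ)+1)*((m:ℚ)+s+1)) * z (r+1) m (s+1)
            - C ((r:ℚ)+m+2) * X * ((X-1) * derivative (z (r+1) m (s+1))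
              + C ((r:ℚ)+1) * z (r+1) m (s+1))) = 0 := by
  have h := ode r m s
  simp only [derivative_add, derivative_mul, derivative_C, derivative_X, derivative_X_pow] at h ⊢
  simp only [C_add, C_sub, C_mul, C_1, map_ofNat, Nat.cast_one, Nat.cast_ofNat] at h ⊢
  linear_combination (-(C ((s:ℚ)) - C ((r:ℚ)) - 1 + (C ((r:ℚ)) + C ((m:ℚ)) + 2) * X)) * h

lemma final_alg {K : Type*} [Field K] (T w w' S R M γ n d : K)
    (hT : T ≠ 0) (hT1 : T - 1 ≠ 0) (hw : w ≠ 0) (hγ : γ ≠ 0)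
    (hd : d = γ * w)
    (hn : (R+1) * n = -(γ*(T*(T-1)*w' + (S*(T-1) - (M-R+S-1)*T)*w))) :
    w'/w = -S/T + (M-R+S-1)/(T-1) - ((R+1)/(T*(T-1))) * (n/d) := by
  subst hd
  field_simp
  linear_combination hn
theorem aux (r m s : ℕ) (hm : 0 < m) :
    let φ : Polynomial ℚ →+* RatFunc ℚ := algebraMap (Polynomial ℚ) (RatFunc ℚ)
    let T : RatFunc ℚ := RatFunc.X
    φ (derivative (W (r+1) m (s+1))) / φ (W (r+1) m (s+1))
      = -((s+1 : ℕ) : RatFunc ℚ) / T + ((m : RatFunc ℚ) - ((r+1 : ℕ) : RatFunc ℚ) + ((s+1 : ℕ) : RatFunc ℚ) - 1) / (T - 1)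
        - ((((r+1 : ℕ) : RatFunc ℚ) + 1) / (T * (T - 1))) *
          ((((r+1 : ℕ) : RatFunc ℚ) * ((m : RatFunc ℚ) + ((s+1 : ℕ) : RatFunc ℚ)) * φ (z (r+1) m (s+1))
              - (((r+1 : ℕ) : RatFunc ℚ) + m + 1) * T *
                ((T - 1) * φ (derivative (z (r+1) m (s+1))) + ((r+1 : ℕ) : RatFunc ℚ) * φ (z (r+1) m (s+1))))
            / ((((s+1 : ℕ) : RatFunc ℚ) - ((r+1 : ℕ) : RatFunc ℚ) - 1) * φ (derivative (z (r+1) m (s+1)))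
                + (((r+1 : ℕ) : RatFunc ℚ) + m + 1) *
                  (T * φ (derivative (z (r+1) m (s+1))) + ((r+1 : ℕ) : RatFunc ℚ) * φ (z (r+1) m (s+1))))) := by
  intro φ T
  have hX : φ X = T := RatFunc.algebraMap_X
  have hW0 : W (r+1) m (s+1) ≠ 0 := by
    intro h
    have h2 := coeff_W r m s m
    rw [h, if_pos le_rfl, Nat.sub_self, coeff_zero] at h2
    have h3 : 0 < Nat.choose (r+m+2) m := Nat.choose_pos (by omega)
    have h4 : 0 < Nat.choose (s+m+1) 0 := Nat.choose_pos (by omega)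
    have h5 : (0:ℚ) < ((Nat.choose (r+m+2) m : ℚ)) * (Nat.choose (s+m+1) 0 : ℚ) := by
      have i1 := (Nat.cast_pos (α := ℚ)).2 h3
      have i2 := (Nat.cast_pos (α := ℚ)).2 h4
      positivity
    rw [pow_zero, one_mul] at h2
    exact absurd h2.symm (by exact_mod_cast h5.ne')
  have hcc : cc r m s ≠ 0 := by
    unfold cc
    have h3 : (0:ℚ) < (Nat.choose (s+m+1) m : ℚ) :=
      (Nat.cast_pos (α := ℚ)).2 (Nat.choose_pos (by omega))
    apply div_ne_zero
    · apply mul_ne_zero (pow_ne_zero _ (by norm_num))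
      positivity
    · positivity
  have hγ : φ (C (cc r m s)) ≠ 0 := RatFunc.algebraMap_ne_zero (by simpa using hcc)
  have hT : T ≠ 0 := RatFunc.X_ne_zero
  have hT1 : T - 1 ≠ 0 := by
    have h1 : φ (X - C 1) = T - 1 := by rw [map_sub, hX, Polynomial.C_1, map_one]
    rw [← h1]
    exact RatFunc.algebraMap_ne_zero (Polynomial.X_sub_C_ne_zero 1)
  have hw : φ (W (r+1) m (s+1)) ≠ 0 := RatFunc.algebraMap_ne_zero hW0
  -- polynomial-level preparation
  have hDer : derivative (C ((s:ℚ)-r-1) * derivative (z (r+1) m (s+1))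
      + C ((r:ℚ)+m+2) * (derivative (z (r+1) m (s+1)) * X^1
          + C ((r:ℚ)+1) * z (r+1) m (s+1)))
      = C (cc r m s) * derivative (W (r+1) m (s+1)) := by
    rw [DW r m s, derivative_mul, derivative_C, zero_mul, zero_add]
  have hDW0 := DW r m s
  have hK0 := keyL r m s
  rw [hDer] at hK0
  simp only [C_add, C_sub, C_mul, C_1, map_natCast, map_ofNat] at hDW0 hK0
  have hDW := congrArg φ hDW0
  have hK := congrArg φ hK0
  simp only [map_add, map_mul, map_sub, map_pow, map_one, map_zero, map_natCast,
    map_ofNat, hX] at hDW hK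
  have hd : ((↑(s+1) : RatFunc ℚ) - ↑(r+1) - 1) * φ (derivative (z (r+1) m (s+1)))
      + ((↑(r+1) : RatFunc ℚ) + ↑m + 1) * (T * φ (derivative (z (r+1) m (s+1)))
          + (↑(r+1) : RatFunc ℚ) * φ (z (r+1) m (s+1)))
      = φ (C (cc r m s)) * φ (W (r+1) m (s+1)) := by
    push_cast
    linear_combination hDW
  have hn : (((↑(r+1) : RatFunc ℚ)) + 1) *
      ((↑(r+1) : RatFunc ℚ) * ((↑m : RatFunc ℚ) + ↑(s+1)) * φ (z (r+1) m (s+1))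
        - ((↑(r+1) : RatFunc ℚ) + ↑m + 1) * T *
          ((T - 1) * φ (derivative (z (r+1) m (s+1)))
            + (↑(r+1) : RatFunc ℚ) * φ (z (r+1) m (s+1))))
      = -(φ (C (cc r m s)) * (T*(T-1)*φ (derivative (W (r+1) m (s+1)))
          + (((↑(s+1) : RatFunc ℚ))*(T-1)
            - (((↑m : RatFunc ℚ) - ↑(r+1) + ↑(s+1) - 1))*T) * φ (W (r+1) m (s+1)))) := by
    push_cast
    linear_combination hK - (((s:RatFunc ℚ)+1)*(T-1) - (((m:RatFunc ℚ)) - (r:RatFunc ℚ) + (s:RatFunc ℚ) - 1)*T) * hDW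
  exact final_alg T _ _ _ _ _ (φ (C (cc r m s))) _ _ hT hT1 hw hγ hd hn

/-- The identity in `ℚ(t)`:
`W′/W = −s/t + (m−r+s−1)/(t−1) − ((r+1)/(t(t−1)))·(r(m+s)z − (r+m+1)t((t−1)z′+rz))/((s−r−1)z′ + (r+m+1)(tz′+rz))`. -/
theorem statement7 (r m s : ℕ) (hr : 0 < r) (hm : 0 < m) (hs : 0 < s) :
    let φ : Polynomial ℚ →+* RatFunc ℚ := algebraMap (Polynomial ℚ) (RatFunc ℚ)
    let T : RatFunc ℚ := RatFunc.X
    φ (derivative (W r m s)) / φ (W r m s)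
      = -(s : RatFunc ℚ) / T + ((m : RatFunc ℚ) - r + s - 1) / (T - 1)
        - (((r : RatFunc ℚ) + 1) / (T * (T - 1))) *
          (((r : RatFunc ℚ) * ((m : RatFunc ℚ) + s) * φ (z r m s)
              - ((r : RatFunc ℚ) + m + 1) * T *
                ((T - 1) * φ (derivative (z r m s)) + (r : RatFunc ℚ) * φ (z r m s)))
            / (((s : RatFunc ℚ) - r - 1) * φ (derivative (z r m s))
                + ((r : RatFunc ℚ) + m + 1) *
                  (T * φ (derivative (z r m s)) + (r : RatFunc ℚ) * φ (z r m s)))) := by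
  obtain ⟨r', rfl⟩ : ∃ r', r = r'+1 := ⟨r-1, by omega⟩
  obtain ⟨s', rfl⟩ : ∃ s', s = s'+1 := ⟨s-1, by omega⟩
  exact aux r' m s' hm
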